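/- For every ρ ∈ (0,1): 1 − ρ ≥ (3/2) · ρ · (log ρ)², i.e. the ratio (1 − ρ)/(ρ (log ρ)²) is bounded below by 3/2 on (0,1). -/
import Mathlib

lemma aux18 (t : ℝ) (ht : 0 ≤ t) : 1 + (3/2) * t ^ 2 ≤ Real.exp t := by
  have h := Real.sum_le_exp_of_nonneg ht 6
  have hs : ∑ i ∈ Finset.range 6, t ^ i / i.factorial =
      1 + t + t^2/2 + t^3/6 + t^4/24 + t^5/120 := by
    simp [Finset.sum_range_succ, Nat.factorial]
  rw [hs] at h
  nlinarith [sq_nonneg (t^2 + 5/2*t - 8), sq_nonneg (t - 27/20), sq_nonneg t, sq_nonneg (t-1), mul_nonneg ht (sq_nonneg (t-2))]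

/-- For every `ρ ∈ (0,1)`, `1 − ρ ≥ (3/2)·ρ·(log ρ)²`, i.e. the relative
efficiency `(1 − ρ)/(ρ (log ρ)²)` is bounded below by `3/2` on `(0,1)`. -/
theorem stmt_18 : ∀ ρ ∈ Set.Ioo (0:ℝ) 1, (3 / 2 : ℝ) * ρ * Real.log ρ ^ 2 ≤ 1 - ρ := by
  rintro ρ ⟨h0, h1⟩
  set t : ℝ := -Real.log ρ with hts
  have ht : 0 ≤ t := by
    have := Real.log_neg h0 h1
    linarith
  have hρ : ρ = Real.exp (-t) := by
    rw [hts, neg_neg, Real.exp_log h0]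
  have key := aux18 t ht
  have hpos : 0 < Real.exp (-t) := Real.exp_pos _
  have hmul : Real.exp (-t) * Real.exp t = 1 := by
    rw [← Real.exp_add]; simp
  rw [hρ, Real.log_exp]
  nlinarith [mul_le_mul_of_nonneg_left key hpos.le, sq_nonneg t]
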